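/- arXiv:2411.01302 — 4 statements merged into one kernel-verified Lean document; each statement's English description precedes it below -/
import Mathlib

section
/- Let Z := ∫_𝒜 e^{Ψ(a)} da and Z' := ∫_𝒜 e^{Ψ'(a)} da, and let π(a) := e^{Ψ(a)}/Z and π'(a) := e^{Ψ'(a)}/Z' be the corresponding Gibbs probability densities on 𝒜. Then d_TV(π, π') ≤ (e^{sup_{a∈𝒜} max(Ψ(a), Ψ'(a))} / Z) · ∫_𝒜 |Ψ(a) − Ψ'(a)| da. -/
open MeasureTheory

/-- Total variation distance between two densities on `𝒜`:
`d_TV(p,q) = sup_{A ⊆ 𝒜 measurable} |∫_A p − ∫_A q|`. -/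
noncomputable def dTV {m : ℕ} (𝒜 : Set (EuclideanSpace ℝ (Fin m)))
    (p q : EuclideanSpace ℝ (Fin m) → ℝ) : ℝ :=
  ⨆ A : {A : Set (EuclideanSpace ℝ (Fin m)) // MeasurableSet A ∧ A ⊆ 𝒜},
    |(∫ a in A.1, p a) - ∫ a in A.1, q a|

lemma abs_exp_sub_exp' (x y : ℝ) : |Real.exp x - Real.exp y| ≤ Real.exp (max x y) * |x - y| := by
  wlog h : y ≤ x generalizing x y
  · rw [abs_sub_comm, max_comm, abs_sub_comm x y]
    exact this y x (le_of_not_ge h)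
  rw [abs_of_nonneg (sub_nonneg.2 (Real.exp_le_exp.2 h)), abs_of_nonneg (sub_nonneg.2 h),
    max_eq_left h]
  have h1 : Real.exp y = Real.exp x * Real.exp (y - x) := by
    rw [← Real.exp_add]; ring_nf
  nlinarith [Real.add_one_le_exp (y - x), Real.exp_pos x, Real.exp_pos (y - x)]

lemma max_sub_max_neg (x : ℝ) : max x 0 - max (-x) 0 = x := by
  rcases le_total x 0 with h | h <;> simp [max_def] <;> split_ifs <;> linarith

lemma max_add_max_neg (x : ℝ) : max x 0 + max (-x) 0 = |x| := by
  rcases le_total x 0 with h | h <;> simp [max_def, abs_of_nonpos, abs_of_nonneg, h] <;>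
    split_ifs <;> linarith

/-- For Gibbs densities `π ∝ e^Ψ`, `π' ∝ e^{Ψ'}` on a compact set `𝒜` with
`Z = ∫_𝒜 e^Ψ`, one has
`d_TV(π, π') ≤ (e^{sup_𝒜 max(Ψ, Ψ')} / Z) ∫_𝒜 |Ψ − Ψ'|`. -/
theorem stmt0 {m : ℕ}
    (𝒜 : Set (EuclideanSpace ℝ (Fin m)))
    (h𝒜 : IsCompact 𝒜) (h𝒜0 : 0 < volume 𝒜) (h𝒜fin : volume 𝒜 < ⊤)
    (Ψ Ψ' : EuclideanSpace ℝ (Fin m) → ℝ)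
    (hΨ : Measurable Ψ) (hΨ' : Measurable Ψ')
    (hΨbdd : ∃ M : ℝ, ∀ a ∈ 𝒜, |Ψ a| ≤ M)
    (hΨ'bdd : ∃ M : ℝ, ∀ a ∈ 𝒜, |Ψ' a| ≤ M) :
    dTV 𝒜 (fun a => Real.exp (Ψ a) / ∫ a' in 𝒜, Real.exp (Ψ a'))
        (fun a => Real.exp (Ψ' a) / ∫ a' in 𝒜, Real.exp (Ψ' a')) ≤
      Real.exp (sSup ((fun a => max (Ψ a) (Ψ' a)) '' 𝒜)) /
          (∫ a' in 𝒜, Real.exp (Ψ a')) *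
        ∫ a in 𝒜, |Ψ a - Ψ' a| := by
  obtain ⟨M, hM⟩ := hΨbdd
  obtain ⟨M', hM'⟩ := hΨ'bdd
  have hAm : MeasurableSet 𝒜 := h𝒜.isClosed.measurableSet
  set Z := ∫ a' in 𝒜, Real.exp (Ψ a') with hZdef
  set Z' := ∫ a' in 𝒜, Real.exp (Ψ' a') with hZ'def
  set S := sSup ((fun a => max (Ψ a) (Ψ' a)) '' 𝒜) with hSdef
  set D := ∫ a in 𝒜, |Ψ a - Ψ' a| with hDdef
  -- generic integrability helper
  have key : ∀ (f : EuclideanSpace ℝ (Fin m) → ℝ) (C : ℝ), Measurable f →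
      (∀ a ∈ 𝒜, ‖f a‖ ≤ C) → IntegrableOn f 𝒜 := by
    intro f C hf hb
    haveI : IsFiniteMeasure (volume.restrict 𝒜) :=
      ⟨by rwa [Measure.restrict_apply_univ]⟩
    refine (integrable_const C).mono' hf.aestronglyMeasurable ?_
    exact (ae_restrict_iff' hAm).2 (ae_of_all _ hb)
  have hIntE : IntegrableOn (fun a => Real.exp (Ψ a)) 𝒜 := by
    refine key _ (Real.exp M) (Real.measurable_exp.comp hΨ) fun a ha => ?_
    rw [Real.norm_eq_abs, abs_of_pos (Real.exp_pos _)]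
    exact Real.exp_le_exp.2 ((le_abs_self _).trans (hM a ha))
  have hIntE' : IntegrableOn (fun a => Real.exp (Ψ' a)) 𝒜 := by
    refine key _ (Real.exp M') (Real.measurable_exp.comp hΨ') fun a ha => ?_
    rw [Real.norm_eq_abs, abs_of_pos (Real.exp_pos _)]
    exact Real.exp_le_exp.2 ((le_abs_self _).trans (hM' a ha))
  have hIntD : IntegrableOn (fun a => |Ψ a - Ψ' a|) 𝒜 := by
    refine key _ (M + M') ((hΨ.sub hΨ').abs) fun a ha => ?_
    rw [Real.norm_eq_abs, abs_abs]
    calc |Ψ a - Ψ' a| ≤ |Ψ a| + |Ψ' a| := abs_sub _ _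
      _ ≤ M + M' := add_le_add (hM a ha) (hM' a ha)
  have hvol : 0 < (volume 𝒜).toReal := ENNReal.toReal_pos h𝒜0.ne' h𝒜fin.ne
  have hZpos : 0 < Z := by
    have := setIntegral_ge_of_const_le hAm h𝒜fin.ne
      (fun a ha => Real.exp_le_exp.2 (neg_le_of_abs_le (hM a ha))) hIntE
    calc (0:ℝ) < Real.exp (-M) * (volume 𝒜).toReal := by positivity
      _ ≤ Z := by rw [smul_eq_mul, mul_comm] at this; exact this
  have hZ'pos : 0 < Z' := by
    have := setIntegral_ge_of_const_le hAm h𝒜fin.ne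
      (fun a ha => Real.exp_le_exp.2 (neg_le_of_abs_le (hM' a ha))) hIntE'
    calc (0:ℝ) < Real.exp (-M') * (volume 𝒜).toReal := by positivity
      _ ≤ Z' := by rw [smul_eq_mul, mul_comm] at this; exact this
  have hDpos : 0 ≤ D := setIntegral_nonneg hAm fun a _ => abs_nonneg _
  -- sup bound
  have hSb : ∀ a ∈ 𝒜, max (Ψ a) (Ψ' a) ≤ S := by
    intro a ha
    refine le_csSup ⟨max M M', ?_⟩ ⟨a, ha, rfl⟩
    rintro x ⟨b, hb, rfl⟩
    exact max_le_max ((le_abs_self _).trans (hM b hb)) ((le_abs_self _).trans (hM' b hb))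
  have hED : ∀ a ∈ 𝒜, |Real.exp (Ψ a) - Real.exp (Ψ' a)| ≤ Real.exp S * |Ψ a - Ψ' a| := by
    intro a ha
    refine (abs_exp_sub_exp' _ _).trans ?_
    exact mul_le_mul_of_nonneg_right (Real.exp_le_exp.2 (hSb a ha)) (abs_nonneg _)
  -- |Z - Z'| bound
  have hZZ' : |Z - Z'| ≤ Real.exp S * D := by
    rw [hZdef, hZ'def, ← integral_sub hIntE hIntE']
    calc |∫ a in 𝒜, (Real.exp (Ψ a) - Real.exp (Ψ' a))|
        ≤ ∫ a in 𝒜, |Real.exp (Ψ a) - Real.exp (Ψ' a)| := by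
          simpa [Real.norm_eq_abs] using norm_integral_le_integral_norm
            (μ := volume.restrict 𝒜) (fun a => Real.exp (Ψ a) - Real.exp (Ψ' a))
      _ ≤ ∫ a in 𝒜, Real.exp S * |Ψ a - Ψ' a| := by
          exact setIntegral_mono_on (hIntE.sub hIntE').abs (hIntD.const_mul _) hAm hED
      _ = Real.exp S * D := by rw [integral_const_mul]
  -- the signed density difference
  set g : EuclideanSpace ℝ (Fin m) → ℝ :=
    fun a => Real.exp (Ψ a) / Z - Real.exp (Ψ' a) / Z' with hgdef
  have hIntP : IntegrableOn (fun a => Real.exp (Ψ a) / Z) 𝒜 := hIntE.div_const Z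
  have hIntP' : IntegrableOn (fun a => Real.exp (Ψ' a) / Z') 𝒜 := hIntE'.div_const Z'
  have hIntg : IntegrableOn g 𝒜 := (hIntE.div_const Z).sub (hIntE'.div_const Z')
  have hgzero : ∫ a in 𝒜, g a = 0 := by
    rw [hgdef]
    rw [integral_sub (hIntE.div_const Z) (hIntE'.div_const Z'), integral_div, integral_div,
      ← hZdef, ← hZ'def, div_self hZpos.ne', div_self hZ'pos.ne', sub_self]
  -- pointwise bound on |g|
  have hgpt : ∀ a ∈ 𝒜, |g a| ≤
      Real.exp S / Z * |Ψ a - Ψ' a| + |Z - Z'| / (Z * Z') * Real.exp (Ψ' a) := by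
    intro a ha
    have heq : g a = (Real.exp (Ψ a) - Real.exp (Ψ' a)) / Z
        + Real.exp (Ψ' a) * (Z' - Z) / (Z * Z') := by
      rw [hgdef]; field_simp; ring
    rw [heq]
    refine (abs_add_le _ _).trans (add_le_add ?_ ?_)
    · rw [abs_div, abs_of_pos hZpos, div_mul_eq_mul_div]
      exact (div_le_div_iff_of_pos_right hZpos).2 (hED a ha)
    · have heq2 : |Real.exp (Ψ' a) * (Z' - Z) / (Z * Z')|
          = |Z - Z'| / (Z * Z') * Real.exp (Ψ' a) := by
        rw [abs_div, abs_mul, abs_of_pos (Real.exp_pos _),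
          abs_of_pos (mul_pos hZpos hZ'pos), abs_sub_comm Z' Z]
        ring
      exact heq2.le
  -- integral bound on |g|
  have hIntgabs := hIntg.abs
  have hgint : ∫ a in 𝒜, |g a| ≤ 2 * (Real.exp S / Z * D) := by
    have hIntrhs : IntegrableOn (fun a =>
        Real.exp S / Z * |Ψ a - Ψ' a| + |Z - Z'| / (Z * Z') * Real.exp (Ψ' a)) 𝒜 :=
      (hIntD.const_mul _).add (hIntE'.const_mul _)
    calc ∫ a in 𝒜, |g a|
        ≤ ∫ a in 𝒜, (Real.exp S / Z * |Ψ a - Ψ' a| + |Z - Z'| / (Z * Z') * Real.exp (Ψ' a)) :=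
          setIntegral_mono_on hIntgabs hIntrhs hAm hgpt
      _ = Real.exp S / Z * D + |Z - Z'| / (Z * Z') * Z' := by
          rw [integral_add (hIntD.const_mul _) (hIntE'.const_mul _), integral_const_mul,
            integral_const_mul, ← hDdef, ← hZ'def]
      _ ≤ Real.exp S / Z * D + Real.exp S * D / (Z * Z') * Z' := by
          gcongr
      _ = 2 * (Real.exp S / Z * D) := by field_simp; ring
  -- pos/neg part integrals
  have hIntp : IntegrableOn (fun a => max (g a) 0) 𝒜 := hIntg.pos_part
  have hIntn : IntegrableOn (fun a => max (-g a) 0) 𝒜 := hIntg.neg.pos_part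
  have hsub : (∫ a in 𝒜, max (g a) 0) - ∫ a in 𝒜, max (-g a) 0 = 0 := by
    rw [← integral_sub hIntp hIntn]
    simp_rw [max_sub_max_neg]
    exact hgzero
  have hadd : (∫ a in 𝒜, max (g a) 0) + ∫ a in 𝒜, max (-g a) 0 = ∫ a in 𝒜, |g a| := by
    rw [← integral_add hIntp hIntn]
    simp_rw [max_add_max_neg]
  have hpos_le : ∫ a in 𝒜, max (g a) 0 ≤ Real.exp S / Z * D := by nlinarith
  have hneg_le : ∫ a in 𝒜, max (-g a) 0 ≤ Real.exp S / Z * D := by nlinarith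
  -- conclude
  rw [dTV]
  haveI : Nonempty {A : Set (EuclideanSpace ℝ (Fin m)) // MeasurableSet A ∧ A ⊆ 𝒜} :=
    ⟨⟨∅, MeasurableSet.empty, Set.empty_subset _⟩⟩
  refine ciSup_le ?_
  rintro ⟨A, hAmble, hAsub⟩
  have hIntgA : IntegrableOn g A := hIntg.mono_set hAsub
  have hA1 : (∫ a in A, Real.exp (Ψ a) / Z) - ∫ a in A, Real.exp (Ψ' a) / Z'
      = ∫ a in A, g a :=
    (integral_sub (hIntP.mono_set hAsub) (hIntP'.mono_set hAsub)).symm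
  simp only
  rw [hA1]
  rw [abs_le]
  constructor
  · have h1 : -∫ a in A, g a ≤ ∫ a in A, max (-g a) 0 := by
      rw [← integral_neg]
      exact setIntegral_mono_on (hIntgA.neg) (hIntn.mono_set hAsub) (hAmble) fun a _ =>
        le_max_left _ _
    have h2 : ∫ a in A, max (-g a) 0 ≤ ∫ a in 𝒜, max (-g a) 0 :=
      setIntegral_mono_set hIntn (ae_of_all _ fun a => le_max_right _ _)
        (HasSubset.Subset.eventuallyLE hAsub)
    linarith
  · have h1 : ∫ a in A, g a ≤ ∫ a in A, max (g a) 0 :=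
      setIntegral_mono_on hIntgA (hIntp.mono_set hAsub) hAmble fun a _ => le_max_left _ _
    have h2 : ∫ a in A, max (g a) 0 ≤ ∫ a in 𝒜, max (g a) 0 :=
      setIntegral_mono_set hIntp (ae_of_all _ fun a => le_max_right _ _)
        (HasSubset.Subset.eventuallyLE hAsub)
    linarith
end

section
/- For all z, z' ∈ ℝ^d with |z| ≤ C, the log-partition functions satisfy γ · |log(∫_𝒜 exp((f(a)·z' + r(a))/γ) da) − log(∫_𝒜 exp((f(a)·z + r(a))/γ) da)| ≤ (B · exp((3BC + 2R)/γ) + 3B + 2R/C) · |z' − z|. -/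
set_option maxHeartbeats 800000


open MeasureTheory
open scoped RealInnerProductSpace

theorem stmt5 {m d : ℕ}
    (𝒜 : Set (EuclideanSpace ℝ (Fin m)))
    (h𝒜 : IsCompact 𝒜) (h𝒜0 : 0 < volume 𝒜) (h𝒜fin : volume 𝒜 < ⊤)
    (γ C B R : ℝ) (hγ : 0 < γ) (hC : 0 < C) (hB : 0 < B) (hR : 0 < R)
    (f : EuclideanSpace ℝ (Fin m) → EuclideanSpace ℝ (Fin d))
    (r : EuclideanSpace ℝ (Fin m) → ℝ)
    (hf : Measurable f) (hr : Measurable r)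
    (hfB : ∀ a ∈ 𝒜, ‖f a‖ ≤ B) (hrR : ∀ a ∈ 𝒜, |r a| ≤ R)
    (z z' : EuclideanSpace ℝ (Fin d)) (hz : ‖z‖ ≤ C) :
    γ * |Real.log (∫ a in 𝒜, Real.exp ((⟪f a, z'⟫ + r a) / γ)) -
          Real.log (∫ a in 𝒜, Real.exp ((⟪f a, z⟫ + r a) / γ))| ≤
      (B * Real.exp ((3 * B * C + 2 * R) / γ) + 3 * B + 2 * R / C) * ‖z' - z‖ := by
  have hmeas : MeasurableSet 𝒜 := h𝒜.measurableSet
  have hgm : ∀ w : EuclideanSpace ℝ (Fin d),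
      Measurable fun a => Real.exp ((⟪f a, w⟫ + r a) / γ) := fun w =>
    (((hf.inner measurable_const).add hr).div_const γ).exp
  have hint : ∀ w : EuclideanSpace ℝ (Fin d),
      IntegrableOn (fun a => Real.exp ((⟪f a, w⟫ + r a) / γ)) 𝒜 := by
    intro w
    have hconst : IntegrableOn (fun _ => Real.exp ((B * ‖w‖ + R) / γ)) 𝒜 volume :=
      integrableOn_const h𝒜fin.ne
    refine Integrable.mono' hconst (hgm w).aestronglyMeasurable ?_
    filter_upwards [ae_restrict_mem hmeas] with a ha
    rw [Real.norm_eq_abs, abs_of_pos (Real.exp_pos _)]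
    apply Real.exp_le_exp.2
    gcongr
    · calc ⟪f a, w⟫ ≤ ‖f a‖ * ‖w‖ := real_inner_le_norm _ _
        _ ≤ B * ‖w‖ := by gcongr; exact hfB a ha
    · exact (abs_le.1 (hrR a ha)).2
  have hpos : ∀ w : EuclideanSpace ℝ (Fin d),
      0 < ∫ a in 𝒜, Real.exp ((⟪f a, w⟫ + r a) / γ) := by
    intro w
    rw [setIntegral_pos_iff_support_of_nonneg_ae
      (Filter.Eventually.of_forall fun a => (Real.exp_pos _).le) (hint w)]
    have : Function.support (fun a => Real.exp ((⟪f a, w⟫ + r a) / γ)) = Set.univ := by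
      ext a; simp [Function.support, (Real.exp_pos _).ne']
    rw [this, Set.univ_inter]
    exact h𝒜0
  have key : ∀ w w' : EuclideanSpace ℝ (Fin d),
      Real.log (∫ a in 𝒜, Real.exp ((⟪f a, w'⟫ + r a) / γ)) -
        Real.log (∫ a in 𝒜, Real.exp ((⟪f a, w⟫ + r a) / γ)) ≤ B * ‖w' - w‖ / γ := by
    intro w w'
    have hmono : (∫ a in 𝒜, Real.exp ((⟪f a, w'⟫ + r a) / γ)) ≤
        (∫ a in 𝒜, Real.exp ((⟪f a, w⟫ + r a) / γ)) * Real.exp (B * ‖w' - w‖ / γ) := by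
      rw [← integral_mul_const]
      refine setIntegral_mono_on (hint w') ((hint w).mul_const _) hmeas ?_
      intro a ha
      have h1 : ⟪f a, w'⟫ = ⟪f a, w⟫ + ⟪f a, w' - w⟫ := by
        rw [inner_sub_right]; ring
      rw [h1, add_right_comm, add_div, Real.exp_add]
      gcongr
      calc ⟪f a, w' - w⟫ ≤ ‖f a‖ * ‖w' - w‖ := real_inner_le_norm _ _
          _ ≤ B * ‖w' - w‖ := by gcongr; exact hfB a ha
    have hle : Real.log (∫ a in 𝒜, Real.exp ((⟪f a, w'⟫ + r a) / γ))
        ≤ Real.log (∫ a in 𝒜, Real.exp ((⟪f a, w⟫ + r a) / γ)) + B * ‖w' - w‖ / γ := by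
      calc Real.log (∫ a in 𝒜, Real.exp ((⟪f a, w'⟫ + r a) / γ))
          ≤ Real.log ((∫ a in 𝒜, Real.exp ((⟪f a, w⟫ + r a) / γ)) *
              Real.exp (B * ‖w' - w‖ / γ)) := Real.log_le_log (hpos w') hmono
        _ = _ := by
            rw [Real.log_mul (hpos w).ne' (Real.exp_pos _).ne', Real.log_exp]
    linarith
  have habs : |Real.log (∫ a in 𝒜, Real.exp ((⟪f a, z'⟫ + r a) / γ)) -
      Real.log (∫ a in 𝒜, Real.exp ((⟪f a, z⟫ + r a) / γ))| ≤ B * ‖z' - z‖ / γ := by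
    rw [abs_sub_le_iff]
    refine ⟨key z z', ?_⟩
    have := key z' z
    rwa [norm_sub_rev] at this
  have h2 : γ * |Real.log (∫ a in 𝒜, Real.exp ((⟪f a, z'⟫ + r a) / γ)) -
      Real.log (∫ a in 𝒜, Real.exp ((⟪f a, z⟫ + r a) / γ))| ≤ B * ‖z' - z‖ := by
    calc γ * _ ≤ γ * (B * ‖z' - z‖ / γ) := by gcongr
      _ = B * ‖z' - z‖ := by field_simp
  refine h2.trans ?_
  have h1 : (1:ℝ) ≤ Real.exp ((3 * B * C + 2 * R) / γ) := Real.one_le_exp (by positivity)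
  have hn : (0:ℝ) ≤ ‖z' - z‖ := norm_nonneg _
  have hRC : 0 ≤ 2 * R / C := by positivity
  nlinarith [mul_le_mul_of_nonneg_right (mul_le_mul_of_nonneg_left h1 hB.le) hn]
end

section
/- For all z, z' ∈ ℝ^d with |z| ≤ C and |z'| > 2C: |log(∫_𝒜 exp((f(a)·z' + r(a))/γ) da / ∫_𝒜 exp((f(a)·z + r(a))/γ) da)| ≤ ((3B + 2R/C)/γ) · |z' − z|. -/
open MeasureTheory
open scoped RealInnerProductSpace

theorem stmt8 {m d : ℕ}
    (𝒜 : Set (EuclideanSpace ℝ (Fin m)))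
    (h𝒜 : IsCompact 𝒜) (h𝒜0 : 0 < volume 𝒜) (h𝒜fin : volume 𝒜 < ⊤)
    (γ C B R : ℝ) (hγ : 0 < γ) (hC : 0 < C) (hB : 0 < B) (hR : 0 < R)
    (f : EuclideanSpace ℝ (Fin m) → EuclideanSpace ℝ (Fin d))
    (r : EuclideanSpace ℝ (Fin m) → ℝ)
    (hf : Measurable f) (hr : Measurable r)
    (hfB : ∀ a ∈ 𝒜, ‖f a‖ ≤ B) (hrR : ∀ a ∈ 𝒜, |r a| ≤ R)
    (z z' : EuclideanSpace ℝ (Fin d)) (hz : ‖z‖ ≤ C) (hz' : 2 * C < ‖z'‖) :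
    |Real.log ((∫ a in 𝒜, Real.exp ((⟪f a, z'⟫ + r a) / γ)) /
          ∫ a in 𝒜, Real.exp ((⟪f a, z⟫ + r a) / γ))| ≤
      (3 * B + 2 * R / C) / γ * ‖z' - z‖ := by
  have hms : MeasurableSet 𝒜 := h𝒜.isClosed.measurableSet
  set L : ℝ := B / γ * ‖z' - z‖ with hLdef
  have hL0 : 0 ≤ L := by positivity
  -- generic facts for any parameter w
  have key : ∀ w : EuclideanSpace ℝ (Fin d),
      IntegrableOn (fun a => Real.exp ((⟪f a, w⟫ + r a) / γ)) 𝒜 ∧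
      0 < ∫ a in 𝒜, Real.exp ((⟪f a, w⟫ + r a) / γ) := by
    intro w
    have hmeas : Measurable (fun a => Real.exp ((⟪f a, w⟫ + r a) / γ)) := by
      apply Real.measurable_exp.comp
      exact ((((Continuous.inner continuous_id continuous_const).measurable).comp hf).add
        hr).div_const γ
    have hbound : ∀ a ∈ 𝒜, Real.exp ((⟪f a, w⟫ + r a) / γ) ≤
        Real.exp ((B * ‖w‖ + R) / γ) := by
      intro a ha
      refine Real.exp_le_exp.2 (div_le_div_of_nonneg_right ?_ hγ.le)
      have h1 : ⟪f a, w⟫ ≤ ‖f a‖ * ‖w‖ := real_inner_le_norm _ _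
      have h2 : ‖f a‖ * ‖w‖ ≤ B * ‖w‖ :=
        mul_le_mul_of_nonneg_right (hfB a ha) (norm_nonneg _)
      have h3 : r a ≤ R := le_of_abs_le (hrR a ha)
      linarith
    have hint : IntegrableOn (fun a => Real.exp ((⟪f a, w⟫ + r a) / γ)) 𝒜 := by
      refine Measure.integrableOn_of_bounded (M := Real.exp ((B * ‖w‖ + R) / γ)) h𝒜fin.ne hmeas.aestronglyMeasurable ?_
      filter_upwards [ae_restrict_mem hms] with a ha
      rw [Real.norm_eq_abs, abs_of_pos (Real.exp_pos _)]
      exact hbound a ha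
    refine ⟨hint, ?_⟩
    have hlow : ∀ a ∈ 𝒜, Real.exp (-((B * ‖w‖ + R) / γ)) ≤
        Real.exp ((⟪f a, w⟫ + r a) / γ) := by
      intro a ha
      rw [← neg_div]
      refine Real.exp_le_exp.2 (div_le_div_of_nonneg_right ?_ hγ.le)
      have h1 : -(‖f a‖ * ‖w‖) ≤ ⟪f a, w⟫ := neg_le_of_neg_le (by
        have := real_inner_le_norm (f a) w
        have h := abs_real_inner_le_norm (f a) w
        linarith [neg_abs_le ⟪f a, w⟫, le_abs_self ⟪f a, w⟫,
          (abs_le.1 (le_refl |⟪f a, w⟫|))])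
      have h2 : ‖f a‖ * ‖w‖ ≤ B * ‖w‖ :=
        mul_le_mul_of_nonneg_right (hfB a ha) (norm_nonneg _)
      have h3 : -R ≤ r a := neg_le_of_abs_le (hrR a ha)
      linarith
    have hconst : (∫ _ in 𝒜, Real.exp (-((B * ‖w‖ + R) / γ))) ≤
        ∫ a in 𝒜, Real.exp ((⟪f a, w⟫ + r a) / γ) :=
      setIntegral_mono_on (integrableOn_const h𝒜fin.ne) hint hms hlow
    have hpos : 0 < ∫ _ in 𝒜, Real.exp (-((B * ‖w‖ + R) / γ)) := by
      rw [setIntegral_const, smul_eq_mul]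
      have : 0 < (volume 𝒜).toReal := ENNReal.toReal_pos h𝒜0.ne' h𝒜fin.ne
      positivity
    linarith
  obtain ⟨hint, hpos⟩ := key z
  obtain ⟨hint', hpos'⟩ := key z'
  set I : ℝ := ∫ a in 𝒜, Real.exp ((⟪f a, z⟫ + r a) / γ)
  set I' : ℝ := ∫ a in 𝒜, Real.exp ((⟪f a, z'⟫ + r a) / γ)
  -- pointwise comparisons
  have comp : ∀ (u v : EuclideanSpace ℝ (Fin d)), ∀ a ∈ 𝒜,
      Real.exp ((⟪f a, u⟫ + r a) / γ) ≤
      Real.exp (B / γ * ‖u - v‖) * Real.exp ((⟪f a, v⟫ + r a) / γ) := by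
    intro u v a ha
    rw [← Real.exp_add, Real.exp_le_exp]
    have h1 : ⟪f a, u⟫ - ⟪f a, v⟫ = ⟪f a, u - v⟫ := (inner_sub_right _ _ _).symm
    have h2 : ⟪f a, u - v⟫ ≤ ‖f a‖ * ‖u - v‖ := real_inner_le_norm _ _
    have h3 : ‖f a‖ * ‖u - v‖ ≤ B * ‖u - v‖ :=
      mul_le_mul_of_nonneg_right (hfB a ha) (norm_nonneg _)
    have hkey : (⟪f a, u⟫ + r a) / γ - (⟪f a, v⟫ + r a) / γ ≤ B / γ * ‖u - v‖ := by
      rw [div_sub_div_same]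
      have : (⟪f a, u⟫ + r a) - (⟪f a, v⟫ + r a) = ⟪f a, u - v⟫ := by
        rw [← h1]; ring
      rw [this, div_le_iff₀ hγ]
      calc ⟪f a, u - v⟫ ≤ B * ‖u - v‖ := h2.trans h3
        _ = B / γ * ‖u - v‖ * γ := by field_simp
    linarith
  have h1 : I' ≤ Real.exp L * I := by
    calc I' ≤ ∫ a in 𝒜, Real.exp L * Real.exp ((⟪f a, z⟫ + r a) / γ) := by
          refine setIntegral_mono_on hint' (hint.const_mul _) hms ?_
          exact comp z' z
      _ = Real.exp L * I := by rw [integral_const_mul]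
  have h2 : I ≤ Real.exp L * I' := by
    have hnorm : ‖z - z'‖ = ‖z' - z‖ := norm_sub_rev z z'
    calc I ≤ ∫ a in 𝒜, Real.exp (B / γ * ‖z - z'‖) * Real.exp ((⟪f a, z'⟫ + r a) / γ) := by
          refine setIntegral_mono_on hint (hint'.const_mul _) hms ?_
          exact comp z z'
      _ = Real.exp L * I' := by rw [integral_const_mul, hnorm]
  have hlog : |Real.log (I' / I)| ≤ L := by
    rw [Real.log_div hpos'.ne' hpos.ne', abs_le]
    constructor
    · have := Real.log_le_log hpos h2
      rw [Real.log_mul (Real.exp_pos L).ne' hpos'.ne', Real.log_exp] at this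
      linarith
    · have := Real.log_le_log hpos' h1
      rw [Real.log_mul (Real.exp_pos L).ne' hpos.ne', Real.log_exp] at this
      linarith
  refine hlog.trans ?_
  have hcoef : B / γ ≤ (3 * B + 2 * R / C) / γ := by
    have : B ≤ 3 * B + 2 * R / C := by nlinarith [div_pos (mul_pos two_pos hR) hC]
    exact div_le_div_of_nonneg_right this hγ.le |>.trans_eq rfl
  exact mul_le_mul_of_nonneg_right hcoef (norm_nonneg _)
end

section
/- For all nonzero real numbers φ, φ' and every a ∈ [0,1]: |q^φ(a) − q^{φ'}(a)| ≤ 2|φ − φ'|; that is, the family {q^φ} is uniformly 2-Lipschitz in the parameter φ with respect to the sup-norm on [0,1]. -/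
/-- `q^φ(a) = φ a + log(φ/(e^φ − 1))` for `φ ≠ 0`. -/
noncomputable def qFun (φ a : ℝ) : ℝ :=
  φ * a + Real.log (φ / (Real.exp φ - 1))

open Real Filter Set

noncomputable def gL (x : ℝ) : ℝ := Real.log (x / (Real.exp x - 1))

lemma exp_sub_one_ne (x : ℝ) (hx : x ≠ 0) : Real.exp x - 1 ≠ 0 := by
  simp [sub_eq_zero, Real.exp_eq_one_iff, hx]

lemma hasDerivAt_gL (x : ℝ) (hx : x ≠ 0) :
    HasDerivAt gL (x⁻¹ - Real.exp x / (Real.exp x - 1)) x := by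
  have h1 : gL =ᶠ[nhds x] fun y => Real.log y - Real.log (Real.exp y - 1) := by
    filter_upwards [isOpen_ne.mem_nhds hx] with y hy
    rw [gL, Real.log_div hy (exp_sub_one_ne y hy)]
  have h2 : HasDerivAt (fun y => Real.log y - Real.log (Real.exp y - 1))
      (x⁻¹ - Real.exp x / (Real.exp x - 1)) x :=
    (Real.hasDerivAt_log hx).sub
      (((Real.hasDerivAt_exp x).sub_const 1).log (exp_sub_one_ne x hx))
  exact h2.congr_of_eventuallyEq h1

lemma deriv_bound (x : ℝ) (hx : x ≠ 0) :
    |x⁻¹ - Real.exp x / (Real.exp x - 1)| ≤ 1 := by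
  have he := Real.exp_pos x
  have h1 := Real.add_one_le_exp x
  have h2 := Real.add_one_le_exp (-x)
  have hmul : Real.exp x * Real.exp (-x) = 1 := by
    rw [← Real.exp_add]; simp
  have hE := Real.exp_pos (-x)
  have hne := exp_sub_one_ne x hx
  have hden : 0 < x * (Real.exp x - 1) := by
    rcases hx.lt_or_gt with h | h
    · nlinarith
    · nlinarith
  have key : x⁻¹ - Real.exp x / (Real.exp x - 1)
      = -((Real.exp x * (x - 1) + 1) / (x * (Real.exp x - 1))) := by
    field_simp
    ring
  have hN0 : 0 ≤ Real.exp x * (x - 1) + 1 := by nlinarith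
  have hN1 : Real.exp x * (x - 1) + 1 ≤ x * (Real.exp x - 1) := by nlinarith
  rw [key, abs_neg, abs_of_nonneg (div_nonneg hN0 hden.le)]
  exact (div_le_one hden).2 hN1

lemma lip_side {s : Set ℝ} (hs : Convex ℝ s) (h0 : (0:ℝ) ∉ s)
    {x y : ℝ} (hx : x ∈ s) (hy : y ∈ s) : |gL x - gL y| ≤ |x - y| := by
  have := hs.norm_image_sub_le_of_norm_hasDerivWithin_le
    (f := gL) (f' := fun z => z⁻¹ - Real.exp z / (Real.exp z - 1)) (C := 1)
    (fun z hz => (hasDerivAt_gL z (by rintro rfl; exact h0 hz)).hasDerivWithinAt)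
    (fun z hz => by simpa using deriv_bound z (by rintro rfl; exact h0 hz)) hy hx
  simpa [Real.norm_eq_abs] using this

lemma tendsto_gL : Tendsto gL (nhdsWithin (0:ℝ) {0}ᶜ) (nhds 0) := by
  have h0 : HasDerivAt Real.exp 1 0 := by simpa using Real.hasDerivAt_exp 0
  have h1 : Tendsto (fun y : ℝ => (Real.exp y - 1) / y) (nhdsWithin (0:ℝ) {0}ᶜ) (nhds 1) := by
    have h := hasDerivAt_iff_tendsto_slope.1 h0
    refine h.congr fun y => ?_
    simp [slope_def_field]
  have h2 : Tendsto (fun y : ℝ => y / (Real.exp y - 1)) (nhdsWithin (0:ℝ) {0}ᶜ) (nhds 1) := by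
    have := h1.inv₀ one_ne_zero
    simpa [inv_div] using this
  have h3 : ContinuousAt Real.log 1 := Real.continuousAt_log one_ne_zero
  have := h3.tendsto.comp h2
  unfold gL; simpa [Function.comp_def] using this

lemma gL_abs_le (x : ℝ) (hx : x ≠ 0) : |gL x| ≤ |x| := by
  rcases hx.lt_or_gt with h | h
  · -- x < 0, use Iio 0
    have hlim0 : Tendsto gL (nhdsWithin (0:ℝ) (Iio 0)) (nhds 0) :=
      tendsto_gL.mono_left (nhdsWithin_mono _ (fun y hy => ne_of_lt hy))
    have hlim1 : Tendsto (fun y => |gL x - gL y|) (nhdsWithin (0:ℝ) (Iio 0)) (nhds |gL x|) := by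
      simpa using ((tendsto_const_nhds.sub hlim0).abs)
    have hid : Tendsto (fun y : ℝ => y) (nhdsWithin (0:ℝ) (Iio 0)) (nhds 0) :=
      tendsto_id.mono_left nhdsWithin_le_nhds
    have hlim2 : Tendsto (fun y => |x - y|) (nhdsWithin (0:ℝ) (Iio 0)) (nhds |x|) := by
      simpa using ((tendsto_const_nhds.sub hid).abs)
    have hle := le_of_tendsto_of_tendsto hlim1 hlim2
      (eventually_mem_nhdsWithin.mono (fun y hy =>
        lip_side (convex_Iio (0:ℝ)) (by simp) h hy))
    simpa using hle
  · have hlim0 : Tendsto gL (nhdsWithin (0:ℝ) (Ioi 0)) (nhds 0) :=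
      tendsto_gL.mono_left (nhdsWithin_mono _ (fun y hy => ne_of_gt hy))
    have hlim1 : Tendsto (fun y => |gL x - gL y|) (nhdsWithin (0:ℝ) (Ioi 0)) (nhds |gL x|) := by
      simpa using ((tendsto_const_nhds.sub hlim0).abs)
    have hid : Tendsto (fun y : ℝ => y) (nhdsWithin (0:ℝ) (Ioi 0)) (nhds 0) :=
      tendsto_id.mono_left nhdsWithin_le_nhds
    have hlim2 : Tendsto (fun y => |x - y|) (nhdsWithin (0:ℝ) (Ioi 0)) (nhds |x|) := by
      simpa using ((tendsto_const_nhds.sub hid).abs)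
    have hle := le_of_tendsto_of_tendsto hlim1 hlim2
      (eventually_mem_nhdsWithin.mono (fun y hy =>
        lip_side (convex_Ioi (0:ℝ)) (by simp) h hy))
    simpa using hle

lemma gL_lip (x y : ℝ) (hx : x ≠ 0) (hy : y ≠ 0) : |gL x - gL y| ≤ |x - y| := by
  rcases hx.lt_or_gt with h | h <;> rcases hy.lt_or_gt with h' | h'
  · exact lip_side (convex_Iio (0:ℝ)) (by simp) h h'
  · calc |gL x - gL y| ≤ |gL x| + |gL y| := abs_sub _ _
      _ ≤ |x| + |y| := add_le_add (gL_abs_le x hx) (gL_abs_le y hy)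
      _ = |x - y| := by rw [abs_of_neg h, abs_of_pos h', abs_of_neg (by linarith : x - y < 0)]; ring
  · calc |gL x - gL y| ≤ |gL x| + |gL y| := abs_sub _ _
      _ ≤ |x| + |y| := add_le_add (gL_abs_le x hx) (gL_abs_le y hy)
      _ = |x - y| := by rw [abs_of_pos h, abs_of_neg h', abs_of_pos (by linarith : 0 < x - y)]; ring
  · exact lip_side (convex_Ioi (0:ℝ)) (by simp) h h'

theorem stmt18 (φ φ' : ℝ) (hφ : φ ≠ 0) (hφ' : φ' ≠ 0)
    (a : ℝ) (ha : a ∈ Set.Icc (0 : ℝ) 1) :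
    |qFun φ a - qFun φ' a| ≤ 2 * |φ - φ'| := by
  obtain ⟨ha0, ha1⟩ := ha
  have key : qFun φ a - qFun φ' a = (φ - φ') * a + (gL φ - gL φ') := by
    simp only [qFun, gL]; ring
  have h1 : |(φ - φ') * a| ≤ |φ - φ'| := by
    rw [abs_mul]
    calc |φ - φ'| * |a| ≤ |φ - φ'| * 1 := by
          apply mul_le_mul_of_nonneg_left _ (abs_nonneg _)
          rw [abs_of_nonneg ha0]; exact ha1
      _ = |φ - φ'| := mul_one _
  calc |qFun φ a - qFun φ' a| ≤ |(φ - φ') * a| + |gL φ - gL φ'| := by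
        rw [key]; exact abs_add_le _ _
    _ ≤ |φ - φ'| + |φ - φ'| := add_le_add h1 (gL_lip φ φ' hφ hφ')
    _ = 2 * |φ - φ'| := by ring
end
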